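/- In a finite-horizon MDP, for any value function f = (f_1,...,f_H) with f_h : X × A → ℝ and any policy π', the value difference satisfies V_1^{π'}(x_1) - V_1^{π^f}(x_1) ≤ Σ_{h=1}^H E_{π^f}[(E_h f)(x_h,a_h)] - Σ_{h=1}^H E_{π'}[(E_h f)(x_h,a_h)], where π^f is the greedy policy of f and (E_h f)(x,a) = f_h(x,a) - (T_h f_{h+1})(x,a) is the Bellman residual. -/
import Mathlib


open Finset

noncomputable section

variable {X A : Type*}

/-- Value of a stochastic policy `π` computed with `fuel` remaining steps,
starting at time step `h` in state `x`, for mean rewards `r` and transition kernel `P`. -/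
def val [Fintype X] [Fintype A] (P : ℕ → X → A → X → ℝ) (r : ℕ → X → A → ℝ)
    (π : ℕ → X → A → ℝ) : ℕ → ℕ → X → ℝ
  | 0, _, _ => 0
  | k + 1, h, x => ∑ a, π h x a * (r h x a + ∑ x', P h x a x' * val P r π k (h + 1) x')

/-- State occupancy measure of policy `π` at step `h`, started at `x1` at step 0. -/
def occ [Fintype X] [Fintype A] [DecidableEq X] (P : ℕ → X → A → X → ℝ) (π : ℕ → X → A → ℝ)
    (x1 : X) : ℕ → X → ℝ
  | 0 => fun x => if x = x1 then 1 else 0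
  | h + 1 => fun x' => ∑ x, ∑ a, occ P π x1 h x * π h x a * P h x a x'

/-- Expectation `E_π[φ(x_h, a_h)]` over the trajectory distribution of `π`. -/
def Eexp [Fintype X] [Fintype A] [DecidableEq X] (P : ℕ → X → A → X → ℝ) (π : ℕ → X → A → ℝ)
    (x1 : X) (h : ℕ) (φ : X → A → ℝ) : ℝ :=
  ∑ x, ∑ a, occ P π x1 h x * π h x a * φ x a

/-- Bellman residual `(E_h f)(x,a) = f_h(x,a) - (T_h f_{h+1})(x,a)`. -/
def bellmanRes [Fintype X] [Fintype A] [Nonempty A] (P : ℕ → X → A → X → ℝ)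
    (r : ℕ → X → A → ℝ) (f : ℕ → X → A → ℝ) (h : ℕ) (x : X) (a : A) : ℝ :=
  f h x a -
    (r h x a + ∑ x', P h x a x' * (univ.sup' univ_nonempty fun a' => f (h + 1) x' a'))

/-- A deterministic policy `g`, viewed as a stochastic policy. -/
def dpol [DecidableEq A] (g : ℕ → X → A) : ℕ → X → A → ℝ :=
  fun h x a => if a = g h x then 1 else 0

section Aux

variable [Fintype X] [Fintype A] [DecidableEq X]

/-- Pointwise max of `f h x ·`. -/
def Vsup [Nonempty A] (f : ℕ → X → A → ℝ) (h : ℕ) (x : X) : ℝ :=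
  univ.sup' univ_nonempty fun a' => f h x a'

lemma sum_occ_mul (P : ℕ → X → A → X → ℝ) (π : ℕ → X → A → ℝ) (x1 : X) (h : ℕ) (W : X → ℝ) :
    ∑ x, ∑ a, occ P π x1 h x * π h x a * (∑ x', P h x a x' * W x') =
      ∑ x', occ P π x1 (h + 1) x' * W x' := by
  rw [eq_comm]
  simp only [occ, Finset.sum_mul]
  rw [Finset.sum_comm]
  refine Finset.sum_congr rfl fun x _ => ?_
  rw [Finset.sum_comm]
  refine Finset.sum_congr rfl fun a _ => ?_
  rw [Finset.mul_sum]
  refine Finset.sum_congr rfl fun x' _ => ?_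
  ring

lemma val_occ (P : ℕ → X → A → X → ℝ) (r π : ℕ → X → A → ℝ) (x1 : X) (k : ℕ) :
    ∀ h : ℕ, ∑ x, occ P π x1 h x * val P r π k h x =
      ∑ j ∈ range k, Eexp P π x1 (h + j) (r (h + j)) := by
  induction k with
  | zero => intro h; simp [_root_.val]
  | succ k ih =>
    intro h
    have key := sum_occ_mul P π x1 h (val P r π k (h + 1))
    have expand : ∀ x, occ P π x1 h x *
        (∑ a, π h x a * (r h x a + ∑ x', P h x a x' * val P r π k (h + 1) x')) =
        (∑ a, occ P π x1 h x * π h x a * r h x a)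
          + ∑ a, occ P π x1 h x * π h x a * (∑ x', P h x a x' * val P r π k (h + 1) x') := by
      intro x
      rw [Finset.mul_sum, ← Finset.sum_add_distrib]
      refine Finset.sum_congr rfl fun a _ => ?_
      ring
    simp only [_root_.val]
    simp_rw [expand]
    rw [Finset.sum_add_distrib, key, ih (h + 1), Finset.sum_range_succ', add_comm]
    congr 1
    · refine Finset.sum_congr rfl fun j _ => ?_
      have : h + 1 + j = h + (j + 1) := by omega
      rw [this]

lemma val_eq (P : ℕ → X → A → X → ℝ) (r π : ℕ → X → A → ℝ) (x1 : X) (H : ℕ) :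
    val P r π H 0 x1 = ∑ h ∈ range H, Eexp P π x1 h (r h) := by
  have := val_occ P r π x1 H 0
  simp only [occ, ite_mul, one_mul, zero_mul, Finset.sum_ite_eq', mem_univ, if_true,
    Nat.zero_add] at this
  simpa using this

lemma occ_nonneg (P : ℕ → X → A → X → ℝ) (π : ℕ → X → A → ℝ) (x1 : X)
    (hP : ∀ h x a x', 0 ≤ P h x a x') (hπ : ∀ h x a, 0 ≤ π h x a) :
    ∀ h x, 0 ≤ occ P π x1 h x := by
  intro h
  induction h with
  | zero => intro x; dsimp [occ]; split <;> norm_num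
  | succ h ih =>
    intro x'
    refine Finset.sum_nonneg fun x _ => Finset.sum_nonneg fun a _ => ?_
    exact mul_nonneg (mul_nonneg (ih x) (hπ h x a)) (hP h x a x')

lemma Eexp_res [Nonempty A] (P : ℕ → X → A → X → ℝ) (r f π : ℕ → X → A → ℝ) (x1 : X) (h : ℕ) :
    Eexp P π x1 h (fun x a => bellmanRes P r f h x a) =
      Eexp P π x1 h (f h) - Eexp P π x1 h (r h)
        - ∑ x', occ P π x1 (h + 1) x' * Vsup f (h + 1) x' := by
  rw [← sum_occ_mul P π x1 h (fun x' => Vsup f (h + 1) x')]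
  simp only [Eexp, bellmanRes, Vsup, ← Finset.sum_sub_distrib]
  refine Finset.sum_congr rfl fun x _ => ?_
  refine Finset.sum_congr rfl fun a _ => ?_
  ring

end Aux

/-- Value difference decomposition (Lemma 3 of the paper): for any value function
`f = (f_0, …, f_{H-1})` (with `f_H = 0`), its greedy policy `π^f = g` and any policy `π'`,
`V_1^{π'}(x_1) - V_1^{π^f}(x_1) ≤ Σ_h E_{π^f}[(E_h f)(x_h,a_h)] - Σ_h E_{π'}[(E_h f)(x_h,a_h)]`. -/
theorem value_difference_decomposition
    [Fintype X] [DecidableEq X] [Fintype A] [Nonempty A] [DecidableEq A]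
    (H : ℕ) (P : ℕ → X → A → X → ℝ) (r : ℕ → X → A → ℝ) (x1 : X)
    (hPpos : ∀ h x a x', 0 ≤ P h x a x')
    (hPsum : ∀ h x a, ∑ x', P h x a x' = 1)
    (f : ℕ → X → A → ℝ) (hfH : ∀ x a, f H x a = 0)
    (g : ℕ → X → A) (hgreedy : ∀ h x a, f h x a ≤ f h x (g h x))
    (π' : ℕ → X → A → ℝ)
    (hπ'pos : ∀ h x a, 0 ≤ π' h x a) (hπ'sum : ∀ h x, ∑ a, π' h x a = 1) :
    val P r π' H 0 x1 - val P r (dpol g) H 0 x1 ≤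
      (∑ h ∈ range H, Eexp P (dpol g) x1 h fun x a => bellmanRes P r f h x a) -
        ∑ h ∈ range H, Eexp P π' x1 h fun x a => bellmanRes P r f h x a := by
  have hfV : ∀ h x a, f h x a ≤ Vsup f h x := fun h x a => Finset.le_sup' _ (mem_univ a)
  have hVg : ∀ h x, Vsup f h x = f h x (g h x) := fun h x =>
    le_antisymm (Finset.sup'_le _ _ fun a _ => hgreedy h x a) (Finset.le_sup' _ (mem_univ _))
  have hVH : ∀ x, Vsup f H x = 0 := fun x =>
    le_antisymm (Finset.sup'_le _ _ fun a _ => le_of_eq (hfH x a))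
      (le_trans (le_of_eq (hfH x (Classical.arbitrary A)).symm) (hfV H x _))
  have hsum : ∀ π : ℕ → X → A → ℝ,
      ∑ h ∈ range H, Eexp P π x1 h (fun x a => bellmanRes P r f h x a) =
        (∑ h ∈ range H, (Eexp P π x1 h (f h) - ∑ x, occ P π x1 h x * Vsup f h x))
          + Vsup f 0 x1 - val P r π H 0 x1 := by
    intro π
    simp_rw [Eexp_res P r f π x1]
    rw [val_eq P r π x1 H]
    have tel : ∑ h ∈ range H,
        ((∑ x, occ P π x1 h x * Vsup f h x) - ∑ x, occ P π x1 (h + 1) x * Vsup f (h + 1) x)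
        = (∑ x, occ P π x1 0 x * Vsup f 0 x) - ∑ x, occ P π x1 H x * Vsup f H x :=
      Finset.sum_range_sub' (fun h => ∑ x, occ P π x1 h x * Vsup f h x) H
    rw [Finset.sum_sub_distrib] at tel
    have hB0 : ∑ x, occ P π x1 0 x * Vsup f 0 x = Vsup f 0 x1 := by
      simp [occ, ite_mul, one_mul, zero_mul, Finset.sum_ite_eq']
    have hBH : ∑ x, occ P π x1 H x * Vsup f H x = 0 := by
      simp only [hVH, mul_zero, Finset.sum_const_zero]
    simp only [Finset.sum_sub_distrib]
    linarith
  rw [hsum (dpol g), hsum π']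
  have hDg : ∀ h, Eexp P (dpol g) x1 h (f h) = ∑ x, occ P (dpol g) x1 h x * Vsup f h x := by
    intro h
    simp only [Eexp, dpol]
    refine Finset.sum_congr rfl fun x _ => ?_
    simp only [mul_ite, mul_one, mul_zero, ite_mul, zero_mul, Finset.sum_ite_eq', mem_univ,
      if_true]
    rw [hVg h x]
  have hDπ : ∀ h, Eexp P π' x1 h (f h) ≤ ∑ x, occ P π' x1 h x * Vsup f h x := by
    intro h
    refine Finset.sum_le_sum fun x _ => ?_
    have hocc := occ_nonneg P π' x1 hPpos hπ'pos h x
    calc ∑ a, occ P π' x1 h x * π' h x a * f h x a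
        ≤ ∑ a, occ P π' x1 h x * π' h x a * Vsup f h x :=
          Finset.sum_le_sum fun a _ =>
            mul_le_mul_of_nonneg_left (hfV h x a) (mul_nonneg hocc (hπ'pos h x a))
      _ = occ P π' x1 h x * Vsup f h x := by
          rw [← Finset.sum_mul, ← Finset.mul_sum, hπ'sum, mul_one]
  have h1 : ∑ h ∈ range H, (Eexp P (dpol g) x1 h (f h)
      - ∑ x, occ P (dpol g) x1 h x * Vsup f h x) = 0 :=
    Finset.sum_eq_zero fun h _ => by rw [hDg h, sub_self]
  have h2 : ∑ h ∈ range H, (Eexp P π' x1 h (f h) - ∑ x, occ P π' x1 h x * Vsup f h x) ≤ 0 :=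
    Finset.sum_nonpos fun h _ => sub_nonpos.mpr (hDπ h)
  linarith

end
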